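/- Let φ = ∑_{i=0}^{N-1} c_i |i⟩⊗|i⟩ ⊗ χ where c_i = C_N (i+1)^{-8} (nonincreasing) and χ is any unit vector in an auxiliary bipartite space, taken with its own Schmidt decomposition. If ψ is any unit vector of Schmidt rank at most N' < N (with respect to the bipartition combining the first factors with the first auxiliary factors), then ‖ψ − φ‖ = Ω(N'^{-8}), with constant independent of N, χ. -/

import Mathlib

set_option maxHeartbeats 1000000

noncomputable def CT (N : ℕ) : ℝ :=
  (Real.sqrt (∑ n ∈ Finset.range N, ((n : ℝ) + 1) ^ (-16 : ℤ)))⁻¹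

open scoped InnerProductSpace
open Submodule

lemma proj_bound {E : Type*} [NormedAddCommGroup E] [InnerProductSpace ℂ E]
    (W : Submodule ℂ E) [HasOrthogonalProjection W]
    (x u : E) (hu : u ∈ W) :
    ‖x‖ ^ 2 - ‖(orthogonalProjection W x : E)‖ ^ 2 ≤ ‖u - x‖ ^ 2 := by
  have h1 : ‖x - orthogonalProjection W x‖ ≤ ‖u - x‖ := by
    rw [show ‖x - (orthogonalProjection W x : E)‖ = ‖x - W.starProjection x‖ from rfl,
      starProjection_minimal, norm_sub_rev]
    exact ciInf_le ⟨0, fun y ⟨i, hi⟩ => hi ▸ norm_nonneg _⟩ (⟨u, hu⟩ : W)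
  have h2 : ‖x‖ ^ 2 = ‖(orthogonalProjection W x : E)‖ ^ 2
      + ‖x - orthogonalProjection W x‖ ^ 2 := by
    have h0 : ⟪(orthogonalProjection W x : E), x - orthogonalProjection W x⟫_ℂ = 0 := by
      rw [inner_eq_zero_symm]
      exact starProjection_inner_eq_zero x _ (Submodule.coe_mem _)
    have := norm_add_sq_eq_norm_sq_add_norm_sq_of_inner_eq_zero
      ((orthogonalProjection W x : E)) (x - orthogonalProjection W x) h0
    simpa [pow_two] using this
  have h3 : ‖x - orthogonalProjection W x‖ ^ 2 ≤ ‖u - x‖ ^ 2 :=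
    pow_le_pow_left₀ (norm_nonneg _) h1 2
  linarith

lemma proj_norm_sq {E : Type*} [NormedAddCommGroup E] [InnerProductSpace ℂ E]
    (W : Submodule ℂ E) [FiniteDimensional ℂ W] (x : E) :
    ‖(orthogonalProjection W x : E)‖ ^ 2
      = ∑ k, ‖⟪(stdOrthonormalBasis ℂ W k : E), x⟫_ℂ‖ ^ 2 := by
  set b := stdOrthonormalBasis ℂ W
  have h1 : ‖(orthogonalProjection W x : E)‖ = ‖b.repr (orthogonalProjection W x)‖ := by
    rw [b.repr.norm_map, Submodule.norm_coe]
  rw [h1, EuclideanSpace.norm_eq, Real.sq_sqrt (by positivity)]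
  congr 1
  ext k
  rw [b.repr_apply_apply, inner_orthogonalProjection_eq_of_mem_left]

lemma sum16_le (N : ℕ) : ∑ n ∈ Finset.range N, ((n : ℝ) + 1) ^ (-16 : ℤ) ≤ 2 - 2 / (N + 1) := by
  induction N with
  | zero => norm_num
  | succ N ih =>
    rw [Finset.sum_range_succ]
    have h1 : ((N : ℝ) + 1) ^ (-16 : ℤ) ≤ 2 / ((N + 1) * (N + 2)) := by
      have he : ((N:ℝ)+1) ^ (-16 : ℤ) = (((N:ℝ)+1) ^ (16:ℕ))⁻¹ := by
        rw [zpow_neg, show ((16:ℤ)) = ((16:ℕ):ℤ) from rfl, zpow_natCast]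
      rw [he, inv_eq_one_div, div_le_div_iff₀ (by positivity) (by positivity)]
      ring_nf
      have h2 : ((N:ℝ)+1) * ((N:ℝ)+2) ≤ 2 * ((N:ℝ)+1)^2 := by nlinarith [Nat.cast_nonneg (α := ℝ) N]
      have h3 : ((N:ℝ)+1)^2 ≤ ((N:ℝ)+1)^16 := by
        apply pow_le_pow_right₀ (by nlinarith [Nat.cast_nonneg (α := ℝ) N]) (by norm_num)
      nlinarith
    have h4 : 2 / ((N:ℝ) + 1) - 2 / ((N:ℝ) + 2) = 2 / (((N:ℝ)+1) * ((N:ℝ)+2)) := by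
      field_simp; ring
    push_cast
    rw [show ((N:ℝ)+1+1) = (N:ℝ)+2 from by ring]
    linarith

lemma sum16_pos {N : ℕ} (hN : 1 ≤ N) :
    0 < ∑ n ∈ Finset.range N, ((n : ℝ) + 1) ^ (-16 : ℤ) := by
  apply Finset.sum_pos (fun n _ => by positivity)
  exact ⟨0, Finset.mem_range.mpr hN⟩

lemma CT_ge {N : ℕ} (hN : 1 ≤ N) : (Real.sqrt 2)⁻¹ ≤ CT N := by
  have h1 := sum16_le N
  have h2 := sum16_pos hN
  have h3 : Real.sqrt (∑ n ∈ Finset.range N, ((n : ℝ) + 1) ^ (-16 : ℤ)) ≤ Real.sqrt 2 := by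
    apply Real.sqrt_le_sqrt
    have : 0 ≤ 2 / ((N:ℝ)+1) := by positivity
    linarith
  exact inv_anti₀ (Real.sqrt_pos.mpr h2) h3

lemma CT_pos {N : ℕ} (hN : 1 ≤ N) : 0 < CT N :=
  lt_of_lt_of_le (by positivity) (CT_ge hN)

lemma final_numeric {N N' : ℕ} (hN' : 0 < N') (hNN : N' < N) :
    (1/1024 : ℝ) * (N' : ℝ) ^ (-8 : ℤ) ≤ CT N * ((N' : ℝ) + 1) ^ (-8 : ℤ) := by
  have hN : 1 ≤ N := le_trans hN' hNN.le
  have hCT := CT_ge hN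
  have hs2 : Real.sqrt 2 ≤ 2 := by
    have := Real.sqrt_le_sqrt (show (2:ℝ) ≤ 4 by norm_num)
    rwa [show (4:ℝ) = 2^2 by norm_num, Real.sqrt_sq (by norm_num)] at this
  have hCT2 : (1/2 : ℝ) ≤ CT N := by
    have h0 : (0:ℝ) < Real.sqrt 2 := Real.sqrt_pos.mpr (by norm_num)
    have : (2:ℝ)⁻¹ ≤ (Real.sqrt 2)⁻¹ := inv_anti₀ h0 hs2
    calc (1/2:ℝ) = 2⁻¹ := by norm_num
    _ ≤ (Real.sqrt 2)⁻¹ := this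
    _ ≤ CT N := hCT
  have hz1 : ((N':ℝ)) ^ (-8 : ℤ) = (((N':ℝ)) ^ (8:ℕ))⁻¹ := by
    rw [zpow_neg, show ((8:ℤ)) = ((8:ℕ):ℤ) from rfl, zpow_natCast]
  have hz2 : ((N':ℝ)+1) ^ (-8 : ℤ) = (((N':ℝ)+1) ^ (8:ℕ))⁻¹ := by
    rw [zpow_neg, show ((8:ℤ)) = ((8:ℕ):ℤ) from rfl, zpow_natCast]
  have hN'1 : (1:ℝ) ≤ (N':ℝ) := by exact_mod_cast hN'
  have hb : ((N':ℝ)+1)^(8:ℕ) ≤ 2^(8:ℕ) * (N':ℝ)^(8:ℕ) := by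
    rw [← mul_pow]
    apply pow_le_pow_left₀ (by linarith) (by linarith)
  have hinv : (2^(8:ℕ) * (N':ℝ)^(8:ℕ))⁻¹ ≤ (((N':ℝ)+1)^(8:ℕ))⁻¹ :=
    inv_anti₀ (by positivity) hb
  rw [hz1, hz2]
  calc (1/1024 : ℝ) * ((N':ℝ)^(8:ℕ))⁻¹
      ≤ (1/2 : ℝ) * ((2:ℝ)^(8:ℕ) * (N':ℝ)^(8:ℕ))⁻¹ := by
        rw [mul_inv]
        have ht : (0:ℝ) ≤ ((N':ℝ)^(8:ℕ))⁻¹ := by positivity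
        nlinarith [ht]
    _ ≤ CT N * (((N':ℝ)+1)^(8:ℕ))⁻¹ :=
        mul_le_mul hCT2 hinv (by positivity) (le_trans (by norm_num) hCT2)

theorem stmt5 : ∃ β : ℝ, 0 < β ∧
    ∀ (N N' : ℕ), 0 < N' → N' < N →
    ∀ (m₁ m₂ : Type) [Fintype m₁] [Fintype m₂]
      (χ : EuclideanSpace ℂ (m₁ × m₂))
      (ψ φ : EuclideanSpace ℂ ((Fin N × m₁) × (Fin N × m₂))),
      ‖χ‖ = 1 → ‖ψ‖ = 1 →
      (Matrix.of fun a b => ψ (a, b)).rank ≤ N' →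
      (∀ p : (Fin N × m₁) × (Fin N × m₂),
        φ p = (if p.1.1 = p.2.1
                then ((CT N * (((p.1.1 : ℕ) : ℝ) + 1) ^ (-8 : ℤ) : ℝ) : ℂ) else 0)
              * χ (p.1.2, p.2.2)) →
      β * (N' : ℝ) ^ (-8 : ℤ) ≤ ‖ψ - φ‖ := by
  classical
  refine ⟨1/1024, by norm_num, ?_⟩
  intro N N' hN' hNN m₁ m₂ im1 im2 χ ψ φ hχ hψ hrank hφ
  have hN1 : 1 ≤ N := le_trans hN' hNN.le
  have hz8 : ∀ x : ℝ, x ^ (-8 : ℤ) = (x ^ (8 : ℕ))⁻¹ := fun x => by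
    rw [zpow_neg, show ((8:ℤ)) = ((8:ℕ):ℤ) from rfl, zpow_natCast]
  let L : ((Fin N × m₁) → ℂ) ≃ₗ[ℂ] EuclideanSpace ℂ (Fin N × m₁) :=
    (WithLp.linearEquiv 2 ℂ ((Fin N × m₁) → ℂ)).symm
  let W : Submodule ℂ (EuclideanSpace ℂ (Fin N × m₁)) :=
    (LinearMap.range (Matrix.of fun a b => ψ (a, b)).mulVecLin).map (L : _ →ₗ[ℂ] _)
  have hWrank : Module.finrank ℂ W ≤ N' := by
    have h := LinearEquiv.finrank_map_eq L
      (LinearMap.range (Matrix.of fun a b => ψ (a, b)).mulVecLin)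
    exact le_trans (le_of_eq h) hrank
  have hcolψ : ∀ cc : Fin N × m₂,
      (WithLp.toLp 2 (fun r => ψ (r, cc)) : EuclideanSpace ℂ (Fin N × m₁)) ∈ W := by
    intro cc
    refine Submodule.mem_map.mpr
      ⟨(Matrix.of fun a b => ψ (a, b)).mulVecLin (Pi.single cc 1),
        LinearMap.mem_range_self _ _, ?_⟩
    ext r
    show (Matrix.of fun a b => ψ (a, b)).mulVec (Pi.single cc 1) r = ψ (r, cc)
    simp [Matrix.mulVec, dotProduct, Pi.single_apply]
  set c : Fin N → ℝ := fun j => CT N * (((j : ℕ) : ℝ) + 1) ^ (-8 : ℤ) with hcdef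
  have hcnn : ∀ j, 0 ≤ c j := fun j =>
    mul_nonneg (CT_pos hN1).le (zpow_nonneg (by positivity) _)
  set yv : Fin N → m₂ → EuclideanSpace ℂ (Fin N × m₁) :=
    fun j b => WithLp.toLp 2 (fun p => if p.1 = j then χ (p.2, b) else 0) with hyvdef
  have hyapp : ∀ (j : Fin N) (b : m₂) (i : Fin N) (a : m₁),
      yv j b (i, a) = if i = j then χ (a, b) else 0 := fun _ _ _ _ => rfl
  set S : m₂ → ℝ := fun b => ∑ a : m₁, ‖χ (a, b)‖ ^ 2 with hSdef
  have hS1 : ∑ b, S b = 1 := by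
    have h : ∑ p : m₁ × m₂, ‖χ p‖ ^ 2 = 1 := by
      rw [← PiLp.norm_sq_eq_of_L2, hχ, one_pow]
    rw [← h, Fintype.sum_prod_type]
    exact Finset.sum_comm
  have hynormsq : ∀ j b, ‖yv j b‖ ^ 2 = S b := by
    intro j b
    rw [PiLp.norm_sq_eq_of_L2, Fintype.sum_prod_type]
    have h : ∀ i : Fin N,
        (∑ a : m₁, ‖yv j b (i, a)‖ ^ 2) = if i = j then S b else 0 := by
      intro i
      by_cases h : i = j
      · subst h
        rw [if_pos rfl]
        exact Finset.sum_congr rfl fun a _ => by rw [hyapp, if_pos rfl]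
      · rw [if_neg h]
        refine Finset.sum_eq_zero fun a _ => ?_
        rw [hyapp, if_neg h]
        simp
    simp_rw [h]
    simp
  have hcolφ : ∀ j b,
      (WithLp.toLp 2 (fun r => φ (r, (j, b))) : EuclideanSpace ℂ (Fin N × m₁)) = (c j : ℂ) • yv j b := by
    intro j b
    ext p
    show φ (p, (j, b)) = (c j : ℂ) * (if p.1 = j then χ (p.2, b) else 0)
    rw [hφ]
    by_cases h : p.1 = j
    · simp only [h, if_true, hcdef]
    · simp [h]
  set q : Fin N → ℝ :=
    fun j => ∑ b, ‖(orthogonalProjection W (yv j b) : EuclideanSpace ℂ (Fin N × m₁))‖ ^ 2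
    with hqdef
  have hq0 : ∀ j, 0 ≤ q j := fun j => Finset.sum_nonneg fun b _ => by positivity
  have hproj_le : ∀ j b,
      ‖(orthogonalProjection W (yv j b) : EuclideanSpace ℂ (Fin N × m₁))‖ ≤ ‖yv j b‖ := by
    intro j b
    have h1 := (orthogonalProjection W).le_opNorm (yv j b)
    have h2 := orthogonalProjection_norm_le W
    have h3 : ‖(orthogonalProjection W (yv j b) : EuclideanSpace ℂ (Fin N × m₁))‖
        = ‖orthogonalProjection W (yv j b)‖ := Submodule.norm_coe _
    nlinarith [norm_nonneg (yv j b)]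
  have hq1 : ∀ j, q j ≤ 1 := by
    intro j
    calc q j ≤ ∑ b, ‖yv j b‖ ^ 2 :=
          Finset.sum_le_sum fun b _ =>
            pow_le_pow_left₀ (norm_nonneg _) (hproj_le j b) 2
    _ = ∑ b, S b := by simp_rw [hynormsq]
    _ = 1 := hS1
  have hnorm2 : ‖ψ - φ‖ ^ 2
      = ∑ cc : Fin N × m₂, ∑ r : Fin N × m₁, ‖ψ (r, cc) - φ (r, cc)‖ ^ 2 := by
    rw [PiLp.norm_sq_eq_of_L2]
    simp_rw [PiLp.sub_apply]
    rw [Fintype.sum_prod_type]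
    exact Finset.sum_comm
  have key1 : ∀ j b, c j ^ 2 *
      (S b - ‖(orthogonalProjection W (yv j b) : EuclideanSpace ℂ (Fin N × m₁))‖ ^ 2)
      ≤ ∑ r : Fin N × m₁, ‖ψ (r, (j, b)) - φ (r, (j, b))‖ ^ 2 := by
    intro j b
    set u : EuclideanSpace ℂ (Fin N × m₁) := WithLp.toLp 2 fun r => ψ (r, (j, b)) with hudef
    have hb := proj_bound W ((c j : ℂ) • yv j b) u (hcolψ (j, b))
    have hx : ‖((c j : ℂ) • yv j b)‖ ^ 2 = c j ^ 2 * S b := by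
      rw [norm_smul, Complex.norm_real, Real.norm_eq_abs, abs_of_nonneg (hcnn j),
        mul_pow, hynormsq]
    have hPx : ‖(orthogonalProjection W ((c j : ℂ) • yv j b) : EuclideanSpace ℂ (Fin N × m₁))‖ ^ 2
        = c j ^ 2 *
          ‖(orthogonalProjection W (yv j b) : EuclideanSpace ℂ (Fin N × m₁))‖ ^ 2 := by
      rw [map_smul, Submodule.coe_smul, norm_smul, Complex.norm_real, Real.norm_eq_abs,
        abs_of_nonneg (hcnn j), mul_pow]
    have hcols : ‖u - (c j : ℂ) • yv j b‖ ^ 2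
        = ∑ r : Fin N × m₁, ‖ψ (r, (j, b)) - φ (r, (j, b))‖ ^ 2 := by
      rw [← hcolφ j b, PiLp.norm_sq_eq_of_L2]
      exact Finset.sum_congr rfl fun r _ => by rw [PiLp.sub_apply]
    rw [hx, hPx, hcols] at hb
    linarith
  have key2 : ∑ j : Fin N, c j ^ 2 * (1 - q j) ≤ ‖ψ - φ‖ ^ 2 := by
    rw [hnorm2, Fintype.sum_prod_type]
    apply Finset.sum_le_sum
    intro j _
    calc c j ^ 2 * (1 - q j)
        = ∑ b, c j ^ 2 *
            (S b - ‖(orthogonalProjection W (yv j b) : EuclideanSpace ℂ (Fin N × m₁))‖ ^ 2) := by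
          rw [← Finset.mul_sum, Finset.sum_sub_distrib, hS1, hqdef]
    _ ≤ ∑ b, ∑ r : Fin N × m₁, ‖ψ (r, (j, b)) - φ (r, (j, b))‖ ^ 2 :=
          Finset.sum_le_sum fun b _ => key1 j b
  have hqsum : ∑ j, q j ≤ (N' : ℝ) := by
    set w := stdOrthonormalBasis ℂ W with hwdef
    set rowv : Fin (Module.finrank ℂ W) → Fin N → EuclideanSpace ℂ m₁ :=
      fun k j => WithLp.toLp 2 fun a => (w k : EuclideanSpace ℂ (Fin N × m₁)) (j, a) with hrowvdef
    have hrowapp : ∀ k j a, rowv k j a = (w k : EuclideanSpace ℂ (Fin N × m₁)) (j, a) :=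
      fun _ _ _ => rfl
    set colv : m₂ → EuclideanSpace ℂ m₁ := fun b => WithLp.toLp 2 fun a => χ (a, b) with hcolvdef
    have hcolapp : ∀ b a, colv b a = χ (a, b) := fun _ _ => rfl
    have hrow : ∀ k, ∑ j : Fin N, ‖rowv k j‖ ^ 2 = 1 := by
      intro k
      have h1 : ‖(w k : EuclideanSpace ℂ (Fin N × m₁))‖ = 1 := by
        rw [Submodule.norm_coe]
        exact w.orthonormal.1 k
      have h2 : ∑ p : Fin N × m₁, ‖(w k : EuclideanSpace ℂ (Fin N × m₁)) p‖ ^ 2 = 1 := by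
        rw [← PiLp.norm_sq_eq_of_L2, h1, one_pow]
      rw [← h2, Fintype.sum_prod_type]
      refine Finset.sum_congr rfl fun j _ => ?_
      rw [PiLp.norm_sq_eq_of_L2]
    have hinner : ∀ k (j : Fin N) (b : m₂),
        ⟪(w k : EuclideanSpace ℂ (Fin N × m₁)), yv j b⟫_ℂ = ⟪rowv k j, colv b⟫_ℂ := by
      intro k j b
      rw [PiLp.inner_apply, PiLp.inner_apply, Fintype.sum_prod_type]
      have h : ∀ i : Fin N,
          (∑ a : m₁, (inner ℂ ((w k : EuclideanSpace ℂ (Fin N × m₁)) (i, a)) (yv j b (i, a)) : ℂ))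
          = if i = j then (∑ a : m₁, (inner ℂ (rowv k j a) (colv b a) : ℂ)) else 0 := by
        intro i
        by_cases h : i = j
        · subst h
          rw [if_pos rfl]
          exact Finset.sum_congr rfl fun a _ =>
            by rw [hyapp, if_pos rfl, hrowapp, hcolapp]
        · rw [if_neg h]
          refine Finset.sum_eq_zero fun a _ => ?_
          rw [hyapp, if_neg h]
          exact inner_zero_right _
      simp_rw [h]
      simp
    have hcolχ : ∀ b : m₂, ‖colv b‖ ^ 2 = S b := by
      intro b
      rw [PiLp.norm_sq_eq_of_L2]
    calc ∑ j, q j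
        = ∑ j : Fin N, ∑ b : m₂, ∑ k,
            ‖⟪(w k : EuclideanSpace ℂ (Fin N × m₁)), yv j b⟫_ℂ‖ ^ 2 := by
          apply Finset.sum_congr rfl
          intro j _
          rw [hqdef]
          exact Finset.sum_congr rfl fun b _ => proj_norm_sq W (yv j b)
    _ ≤ ∑ j : Fin N, ∑ b : m₂, ∑ k, ‖rowv k j‖ ^ 2 * S b := by
          apply Finset.sum_le_sum; intro j _
          apply Finset.sum_le_sum; intro b _
          apply Finset.sum_le_sum; intro k _
          rw [hinner k j b, ← hcolχ b, ← mul_pow]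
          exact pow_le_pow_left₀ (norm_nonneg _) (norm_inner_le_norm _ _) 2
    _ = ∑ k, (∑ j : Fin N, ‖rowv k j‖ ^ 2) * (∑ b : m₂, S b) := by
          have e1 : (∑ j : Fin N, ∑ b : m₂, ∑ k, ‖rowv k j‖ ^ 2 * S b)
              = ∑ j : Fin N, ∑ k, ∑ b : m₂, ‖rowv k j‖ ^ 2 * S b :=
            Finset.sum_congr rfl fun j _ => Finset.sum_comm
          rw [e1, Finset.sum_comm]
          refine Finset.sum_congr rfl fun k _ => ?_
          rw [Finset.sum_mul_sum]
    _ = ∑ k : Fin (Module.finrank ℂ W), (1 : ℝ) := by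
          apply Finset.sum_congr rfl
          intro k _
          rw [hrow k, hS1, one_mul]
    _ = (Module.finrank ℂ W : ℝ) := by simp
    _ ≤ (N' : ℝ) := by exact_mod_cast hWrank
  set cN : ℝ := CT N * (((N' : ℕ) : ℝ) + 1) ^ (-8 : ℤ) with hcNdef
  have hcNnn : 0 ≤ cN := mul_nonneg (CT_pos hN1).le (zpow_nonneg (by positivity) _)
  have hcount : cN ^ 2 ≤ ∑ j : Fin N, c j ^ 2 * (1 - q j) := by
    have hsucc : N' + 1 ≤ N := hNN
    set T : Finset (Fin N) := (Finset.range (N' + 1)).attachFin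
      (fun m hm => lt_of_lt_of_le (Finset.mem_range.mp hm) hsucc) with hTdef
    have hTcard : T.card = N' + 1 := by
      rw [hTdef, Finset.card_attachFin, Finset.card_range]
    have hmemT : ∀ j ∈ T, (j : ℕ) ≤ N' := by
      intro j hj
      exact Nat.lt_succ_iff.mp (Finset.mem_range.mp ((Finset.mem_attachFin _).mp hj))
    have hcj : ∀ j ∈ T, cN ≤ c j := by
      intro j hj
      apply mul_le_mul_of_nonneg_left _ (CT_pos hN1).le
      have h1 : ((j : ℕ) : ℝ) + 1 ≤ ((N' : ℕ) : ℝ) + 1 := by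
        have := hmemT j hj
        have : ((j : ℕ) : ℝ) ≤ ((N' : ℕ) : ℝ) := by exact_mod_cast this
        linarith
      rw [hz8, hz8]
      exact inv_anti₀ (by positivity) (pow_le_pow_left₀ (by positivity) h1 8)
    have hTq : ∑ j ∈ T, q j ≤ (N' : ℝ) :=
      le_trans (Finset.sum_le_sum_of_subset_of_nonneg (Finset.subset_univ T)
        (fun j _ _ => hq0 j)) hqsum
    calc cN ^ 2 = cN ^ 2 * (((N' : ℝ) + 1) - (N' : ℝ)) := by ring
      _ ≤ cN ^ 2 * ((T.card : ℝ) - ∑ j ∈ T, q j) := by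
          apply mul_le_mul_of_nonneg_left _ (sq_nonneg cN)
          rw [hTcard]
          push_cast
          linarith
      _ = ∑ j ∈ T, cN ^ 2 * (1 - q j) := by
          rw [← Finset.mul_sum, Finset.sum_sub_distrib, Finset.sum_const, nsmul_eq_mul, mul_one]
      _ ≤ ∑ j ∈ T, c j ^ 2 * (1 - q j) :=
          Finset.sum_le_sum fun j hj =>
            mul_le_mul_of_nonneg_right (pow_le_pow_left₀ hcNnn (hcj j hj) 2)
              (by linarith [hq1 j])
      _ ≤ ∑ j : Fin N, c j ^ 2 * (1 - q j) :=
          Finset.sum_le_sum_of_subset_of_nonneg (Finset.subset_univ T)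
            (fun j _ _ => mul_nonneg (sq_nonneg _) (by linarith [hq1 j]))
  have hfin2 : cN ^ 2 ≤ ‖ψ - φ‖ ^ 2 := le_trans hcount key2
  have hfin : cN ≤ ‖ψ - φ‖ := by
    have := Real.sqrt_le_sqrt hfin2
    rwa [Real.sqrt_sq hcNnn, Real.sqrt_sq (norm_nonneg _)] at this
  exact le_trans (final_numeric hN' hNN) hfin
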